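/- Let F > 0 and ξ = (ξ₁,ξ₂,ξ₃) ∈ ℝ³ with ξ ≠ 0, and let 𝒜(ξ) be the complex 4×4 matrix with rows: row 1 = ( ξ₁ξ₂/|ξ|², (ξ₂²+ξ₃²)/|ξ|², 0, ξ₁ξ₃/(F|ξ|²) ); row 2 = ( −(ξ₁²+ξ₃²)/|ξ|², −ξ₁ξ₂/|ξ|², 0, ξ₂ξ₃/(F|ξ|²) ); row 3 = ( ξ₂ξ₃/|ξ|², −ξ₁ξ₃/|ξ|², 0, −(ξ₁²+ξ₂²)/(F|ξ|²) ); row 4 = ( 0, 0, 1/F, 0 ). Then i·p_F(ξ) and −i·p_F(ξ) are eigenvalues of 𝒜(ξ), where p_F(ξ) = |ξ|_F/(F|ξ|). -/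

import Mathlib

open Complex Matrix

noncomputable section

/-- The dispersion relation `p_F(ξ) = |ξ|_F / (F |ξ|)`. -/
def pF (F : ℝ) (ξ : EuclideanSpace ℝ (Fin 3)) : ℝ :=
  Real.sqrt ((ξ 0) ^ 2 + (ξ 1) ^ 2 + (F * ξ 2) ^ 2) / (F * ‖ξ‖)

/-- The Fourier symbol of the linearized primitive system. -/
def primitiveSymbol (F : ℝ) (ξ : EuclideanSpace ℝ (Fin 3)) : Matrix (Fin 4) (Fin 4) ℂ :=
  !![((ξ 0 * ξ 1 / ‖ξ‖ ^ 2 : ℝ) : ℂ), (((ξ 1 ^ 2 + ξ 2 ^ 2) / ‖ξ‖ ^ 2 : ℝ) : ℂ), 0,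
      ((ξ 0 * ξ 2 / (F * ‖ξ‖ ^ 2) : ℝ) : ℂ);
    ((-((ξ 0 ^ 2 + ξ 2 ^ 2) / ‖ξ‖ ^ 2) : ℝ) : ℂ), ((-(ξ 0 * ξ 1 / ‖ξ‖ ^ 2) : ℝ) : ℂ), 0,
      ((ξ 1 * ξ 2 / (F * ‖ξ‖ ^ 2) : ℝ) : ℂ);
    ((ξ 1 * ξ 2 / ‖ξ‖ ^ 2 : ℝ) : ℂ), ((-(ξ 0 * ξ 2 / ‖ξ‖ ^ 2) : ℝ) : ℂ), 0,
      ((-((ξ 0 ^ 2 + ξ 1 ^ 2) / (F * ‖ξ‖ ^ 2)) : ℝ) : ℂ);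
    0, 0, ((1 / F : ℝ) : ℂ), 0]

set_option maxHeartbeats 1000000 in
/-- Auxiliary determinant computation: the characteristic determinant vanishes
whenever `l ^ 2 * (F ^ 2 * s) = -(a ^ 2 + b ^ 2 + (F * c) ^ 2)`. -/
lemma det4_aux (a b c F l s : ℂ) (hF : F ≠ 0) (hs : s ≠ 0)
    (hs2 : a ^ 2 + b ^ 2 + c ^ 2 = s)
    (hl : l ^ 2 * (F ^ 2 * s) = -(a ^ 2 + b ^ 2 + (F * c) ^ 2)) :
    Matrix.det !![a * b / s - l, (b ^ 2 + c ^ 2) / s, 0, a * c / (F * s);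
      -((a ^ 2 + c ^ 2) / s), -(a * b / s) - l, 0, b * c / (F * s);
      b * c / s, -(a * c / s), 0 - l, -((a ^ 2 + b ^ 2) / (F * s));
      0, 0, 1 / F, 0 - l] = 0 := by
  simp [Matrix.det_succ_row_zero, Fin.sum_univ_succ, Matrix.det_fin_three, Fin.succAbove,
    Matrix.cons_val_succ, Fin.castSucc, Fin.castAdd, Fin.castLE]
  have hu : s * s⁻¹ = 1 := mul_inv_cancel₀ hs
  have hv : F * F⁻¹ = 1 := mul_inv_cancel₀ hF
  linear_combination (l ^ 2 * F⁻¹ ^ 2 * s⁻¹) * hl + (l ^ 2 * c ^ 2 * s⁻¹ ^ 2) * hs2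
    + (l ^ 2 * c ^ 2 * s⁻¹ - l ^ 4 * (F * F⁻¹) ^ 2) * hu
    - ((F * F⁻¹ + 1) * (l ^ 4 + l ^ 2 * c ^ 2 * s⁻¹)) * hv

set_option maxHeartbeats 1000000 in
/-- Any `l` with `l ^ 2 = -(p_F(ξ)) ^ 2` is an eigenvalue of the symbol. -/
lemma eigen_aux (F : ℝ) (hF : 0 < F) (ξ : EuclideanSpace ℝ (Fin 3)) (hξ : ξ ≠ 0)
    (l : ℂ) (hl : l ^ 2 = -(((pF F ξ : ℝ) : ℂ)) ^ 2) :
    ∃ X : Fin 4 → ℂ, X ≠ 0 ∧ (primitiveSymbol F ξ).mulVec X = l • X := by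
  have hn : ‖ξ‖ ≠ 0 := norm_ne_zero_iff.mpr hξ
  have hFn : F ≠ 0 := hF.ne'
  have hn2 : (‖ξ‖ : ℝ) ^ 2 = (ξ 0) ^ 2 + (ξ 1) ^ 2 + (ξ 2) ^ 2 := by
    rw [EuclideanSpace.norm_eq, Real.sq_sqrt (by positivity)]
    simp [Fin.sum_univ_three, sq]
  have hp2 : (pF F ξ) ^ 2 * (F ^ 2 * ‖ξ‖ ^ 2) = (ξ 0) ^ 2 + (ξ 1) ^ 2 + (F * ξ 2) ^ 2 := by
    rw [pF, div_pow, Real.sq_sqrt (by positivity), mul_pow]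
    field_simp
  set a : ℂ := ((ξ 0 : ℝ) : ℂ)
  set b : ℂ := ((ξ 1 : ℝ) : ℂ)
  set c : ℂ := ((ξ 2 : ℝ) : ℂ)
  set s : ℂ := ((‖ξ‖ : ℝ) : ℂ) ^ 2
  have hsC : s ≠ 0 := pow_ne_zero 2 (by exact_mod_cast hn)
  have hFC : (F : ℂ) ≠ 0 := by exact_mod_cast hFn
  have hs2C : a ^ 2 + b ^ 2 + c ^ 2 = s := by
    simp only [a, b, c, s]
    exact_mod_cast (congrArg (fun x : ℝ => (x : ℂ)) hn2).symm
  have hlC : l ^ 2 * ((F : ℂ) ^ 2 * s) = -(a ^ 2 + b ^ 2 + ((F : ℂ) * c) ^ 2) := by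
    rw [hl]
    have : ((pF F ξ : ℝ) : ℂ) ^ 2 * ((F : ℂ) ^ 2 * s) = a ^ 2 + b ^ 2 + ((F : ℂ) * c) ^ 2 := by
      simp only [a, b, c, s]
      exact_mod_cast congrArg (fun x : ℝ => (x : ℂ)) hp2
    rw [← this]; ring
  have hM : primitiveSymbol F ξ - l • 1 =
      !![a * b / s - l, (b ^ 2 + c ^ 2) / s, 0, a * c / ((F : ℂ) * s);
        -((a ^ 2 + c ^ 2) / s), -(a * b / s) - l, 0, b * c / ((F : ℂ) * s);
        b * c / s, -(a * c / s), 0 - l, -((a ^ 2 + b ^ 2) / ((F : ℂ) * s));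
        0, 0, 1 / (F : ℂ), 0 - l] := by
    ext i j
    fin_cases i <;> fin_cases j <;>
      simp [primitiveSymbol, Matrix.one_apply, a, b, c, s] <;> push_cast <;> ring
  have hdet : (primitiveSymbol F ξ - l • 1).det = 0 := by
    rw [hM]
    exact det4_aux a b c (F : ℂ) l s hFC hsC hs2C hlC
  obtain ⟨v, hv0, hv⟩ := Matrix.exists_mulVec_eq_zero_iff.mpr hdet
  refine ⟨v, hv0, ?_⟩
  rw [Matrix.sub_mulVec, Matrix.smul_mulVec, Matrix.one_mulVec, sub_eq_zero] at hv
  exact hv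

theorem eigenvalues_primitive_symbol (F : ℝ) (hF : 0 < F)
    (ξ : EuclideanSpace ℝ (Fin 3)) (hξ : ξ ≠ 0) :
    (∃ X : Fin 4 → ℂ, X ≠ 0 ∧
        (primitiveSymbol F ξ).mulVec X = (Complex.I * ((pF F ξ : ℝ) : ℂ)) • X) ∧
      (∃ X : Fin 4 → ℂ, X ≠ 0 ∧
        (primitiveSymbol F ξ).mulVec X = (-(Complex.I * ((pF F ξ : ℝ) : ℂ))) • X) := by
  constructor
  · exact eigen_aux F hF ξ hξ _ (by rw [mul_pow, Complex.I_sq]; ring)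
  · exact eigen_aux F hF ξ hξ _ (by rw [neg_pow, mul_pow, Complex.I_sq]; ring)

end
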